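/- Let p : ℕ → ℝ be non-increasing and non-negative with finite support and total sum W, with λ ≥ p_1 and W ≤ 5λ. Then C_1 := p_1 + Σ_{k≥1} p_{10k+1} satisfies C_1 ≤ 1.4·λ. -/

import Mathlib

/-- Five machines, first solution, machine 1 (jobs ≡ 1 mod 10):
`C₁ = p 1 + Σ_{k≥1} p (10k+1) ≤ 1.4 λ` when `λ ≥ p 1` and `W ≤ 5 λ`. -/
theorem stmt_13 (p : ℕ → ℝ)
    (hmono : ∀ i j : ℕ, 1 ≤ i → i ≤ j → p j ≤ p i)
    (hnonneg : ∀ j : ℕ, 0 ≤ p j)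
    (hfin : ∃ n : ℕ, ∀ j : ℕ, n < j → p j = 0)
    (W : ℝ) (hW : W = ∑' j : ℕ, p (j + 1))
    (lam : ℝ) (hp1 : p 1 ≤ lam) (hWlam : W ≤ 5 * lam) :
    p 1 + (∑' k : ℕ, p (10 * k + 11)) ≤ 1.4 * lam := by
  obtain ⟨n, hn⟩ := hfin
  -- the tsum over k is a finite sum
  have hT : (∑' k : ℕ, p (10 * k + 11)) = ∑ k ∈ Finset.range (n + 1), p (10 * k + 11) := by
    apply tsum_eq_sum
    intro k hk
    apply hn
    have : n + 1 ≤ k := by simpa using hk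
    omega
  -- summability of j ↦ p (j+1)
  have hsum : Summable (fun j : ℕ => p (j + 1)) := by
    apply summable_of_ne_finset_zero (s := Finset.range (n + 1))
    intro j hj
    apply hn
    have : n + 1 ≤ j := by simpa using hj
    omega
  -- key inequality by induction
  have key : ∀ K : ℕ, p 1 + 10 * ∑ k ∈ Finset.range K, p (10 * k + 11)
      ≤ ∑ j ∈ Finset.range (10 * K + 1), p (j + 1) := by
    intro K
    induction K with
    | zero => simp
    | succ K ih =>
      have hsplit : ∑ j ∈ Finset.range (10 * (K + 1) + 1), p (j + 1)
          = ∑ j ∈ Finset.range (10 * K + 1), p (j + 1)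
            + ∑ j ∈ Finset.Ico (10 * K + 1) (10 * (K + 1) + 1), p (j + 1) := by
        rw [Finset.range_eq_Ico, Finset.range_eq_Ico]
        exact (Finset.sum_Ico_consecutive (fun j => p (j + 1)) (m := 0) (n := 10 * K + 1) (k := 10 * (K + 1) + 1) (by omega) (by omega)).symm
      have hblock : 10 * p (10 * K + 11)
          ≤ ∑ j ∈ Finset.Ico (10 * K + 1) (10 * (K + 1) + 1), p (j + 1) := by
        have hcard : (Finset.Ico (10 * K + 1) (10 * (K + 1) + 1)).card = 10 := by
          rw [Nat.card_Ico]; omega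
        calc 10 * p (10 * K + 11)
            = ∑ _j ∈ Finset.Ico (10 * K + 1) (10 * (K + 1) + 1), p (10 * K + 11) := by
              rw [Finset.sum_const, hcard, nsmul_eq_mul]; norm_num
          _ ≤ ∑ j ∈ Finset.Ico (10 * K + 1) (10 * (K + 1) + 1), p (j + 1) := by
              apply Finset.sum_le_sum
              intro j hj
              rw [Finset.mem_Ico] at hj
              exact hmono (j + 1) (10 * K + 11) (by omega) (by omega)
      rw [hsplit, Finset.sum_range_succ]
      linarith
  have hle : ∑ j ∈ Finset.range (10 * (n + 1) + 1), p (j + 1) ≤ W := by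
    rw [hW]
    exact hsum.sum_le_tsum _ (fun j _ => hnonneg _)
  have hkey := key (n + 1)
  rw [hT]
  nlinarith [Finset.sum_nonneg (fun k (_ : k ∈ Finset.range (n + 1)) => hnonneg (10 * k + 11))]
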